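/- Let σ₁ > 0, λ₁, λ₂ ≥ 0, s ≥ 0 and M₀, P₀ ∈ ℝ with M₀ ≥ 0. For ζ in a neighborhood of 0 (with ζ < σ₁ and (σ₁ − ζ e^{−(σ₁−ζ)s})/(σ₁ − ζ) > 0) define h(ζ) = exp( M₀·log((σ₁ − ζ·e^{−(σ₁−ζ)s})/(σ₁ − ζ)) + λ₁·(ζ/(σ₁−ζ))·(s − (1 − e^{−(σ₁−ζ)s})/(σ₁−ζ)) ), and for ξ in a neighborhood of 0 define F(ξ) = e^{ξ P₀}·h(λ₂(e^{ξ} − 1)). Then F is twice differentiable at 0 with F′(0) = P₀ + λ₂·((λ₁/σ₁)s + (M₀ − λ₁/σ₁)·(1 − e^{−σ₁ s})/σ₁) and F″(0) = (F′(0))² + M₀·(λ₂/σ₁)·(1 − e^{−σ₁ s} + (λ₂/σ₁)[1 − e^{−σ₁ s}(e^{−σ₁ s} + 2 s σ₁)]) + (λ₁λ₂/σ₁²)·[s σ₁ − 1 + e^{−σ₁ s} + 2(λ₂/σ₁)(σ₁ s (1 + e^{−σ₁ s}) − 2(1 − e^{−σ₁ s}))]. -/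

import Mathlib

open Real

noncomputable section
namespace MGF6

def z (lam2 : ℝ) : ℝ → ℝ := fun x => lam2 * (Real.exp x - 1)
def zp (lam2 : ℝ) : ℝ → ℝ := fun x => lam2 * Real.exp x
def dd (sig1 lam2 : ℝ) : ℝ → ℝ := fun x => sig1 - z lam2 x
def qq (sig1 lam2 s : ℝ) : ℝ → ℝ := fun x => Real.exp (-(sig1 - z lam2 x) * s)
def NN (sig1 lam2 s : ℝ) : ℝ → ℝ := fun x => sig1 - z lam2 x * qq sig1 lam2 s x
def BB (sig1 lam2 : ℝ) : ℝ → ℝ := fun x => z lam2 x / dd sig1 lam2 x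
def CC (sig1 lam2 s : ℝ) : ℝ → ℝ := fun x => s - (1 - qq sig1 lam2 s x) / dd sig1 lam2 x
def N1 (sig1 lam2 s : ℝ) : ℝ → ℝ := fun x =>
  -(zp lam2 x * qq sig1 lam2 s x * (1 + s * z lam2 x))
def N2 (sig1 lam2 s : ℝ) : ℝ → ℝ := fun x =>
  -(zp lam2 x * qq sig1 lam2 s x * ((1 + s * z lam2 x) * (1 + s * zp lam2 x) + s * zp lam2 x))
def B1 (sig1 lam2 : ℝ) : ℝ → ℝ := fun x => sig1 * zp lam2 x / dd sig1 lam2 x ^ 2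
def B2 (sig1 lam2 : ℝ) : ℝ → ℝ := fun x =>
  sig1 * zp lam2 x * (dd sig1 lam2 x + 2 * zp lam2 x) / dd sig1 lam2 x ^ 3
def C1 (sig1 lam2 s : ℝ) : ℝ → ℝ := fun x =>
  zp lam2 x * (s * qq sig1 lam2 s x * dd sig1 lam2 x - (1 - qq sig1 lam2 s x)) / dd sig1 lam2 x ^ 2
def C2 (sig1 lam2 s : ℝ) : ℝ → ℝ := fun x =>
  (zp lam2 x * (s * qq sig1 lam2 s x * dd sig1 lam2 x - (1 - qq sig1 lam2 s x)
      + zp lam2 x * s ^ 2 * qq sig1 lam2 s x * dd sig1 lam2 x) * dd sig1 lam2 x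
   + 2 * (zp lam2 x * (s * qq sig1 lam2 s x * dd sig1 lam2 x - (1 - qq sig1 lam2 s x))) * zp lam2 x)
  / dd sig1 lam2 x ^ 3
def gg (sig1 lam1 lam2 s M0 : ℝ) : ℝ → ℝ := fun x =>
  M0 * (Real.log (NN sig1 lam2 s x) - Real.log (dd sig1 lam2 x))
    + lam1 * BB sig1 lam2 x * CC sig1 lam2 s x
def g1 (sig1 lam1 lam2 s M0 : ℝ) : ℝ → ℝ := fun x =>
  M0 * (N1 sig1 lam2 s x / NN sig1 lam2 s x + zp lam2 x / dd sig1 lam2 x)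
    + lam1 * (B1 sig1 lam2 x * CC sig1 lam2 s x + BB sig1 lam2 x * C1 sig1 lam2 s x)
def g2 (sig1 lam1 lam2 s M0 : ℝ) : ℝ → ℝ := fun x =>
  M0 * ((N2 sig1 lam2 s x * NN sig1 lam2 s x - N1 sig1 lam2 s x ^ 2) / NN sig1 lam2 s x ^ 2
      + (zp lam2 x * dd sig1 lam2 x + zp lam2 x ^ 2) / dd sig1 lam2 x ^ 2)
    + lam1 * (B2 sig1 lam2 x * CC sig1 lam2 s x + 2 * B1 sig1 lam2 x * C1 sig1 lam2 s x
      + BB sig1 lam2 x * C2 sig1 lam2 s x)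
def GG (sig1 lam1 lam2 s M0 P0 : ℝ) : ℝ → ℝ := fun x =>
  Real.exp (x * P0 + gg sig1 lam1 lam2 s M0 x)
def G1 (sig1 lam1 lam2 s M0 P0 : ℝ) : ℝ → ℝ := fun x =>
  GG sig1 lam1 lam2 s M0 P0 x * (P0 + g1 sig1 lam1 lam2 s M0 x)
def G2 (sig1 lam1 lam2 s M0 P0 : ℝ) : ℝ → ℝ := fun x =>
  GG sig1 lam1 lam2 s M0 P0 x * ((P0 + g1 sig1 lam1 lam2 s M0 x) ^ 2 + g2 sig1 lam1 lam2 s M0 x)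

lemma hz (lam2 x : ℝ) : HasDerivAt (z lam2) (zp lam2 x) x := by
  exact ((Real.hasDerivAt_exp x).sub_const 1).const_mul lam2

lemma hzp (lam2 x : ℝ) : HasDerivAt (zp lam2) (zp lam2 x) x := by
  exact (Real.hasDerivAt_exp x).const_mul lam2

lemma hdd (sig1 lam2 x : ℝ) : HasDerivAt (dd sig1 lam2) (-zp lam2 x) x := by
  exact (hz lam2 x).const_sub sig1

lemma hqq (sig1 lam2 s x : ℝ) :
    HasDerivAt (qq sig1 lam2 s) (s * zp lam2 x * qq sig1 lam2 s x) x := by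
  have h1 : HasDerivAt (fun x => -(sig1 - z lam2 x) * s) (zp lam2 x * s) x := by
    simpa using ((hz lam2 x).const_sub sig1).neg.mul_const s
  have := h1.exp
  refine this.congr_deriv ?_
  simp [qq]; ring

lemma hNN (sig1 lam2 s x : ℝ) : HasDerivAt (NN sig1 lam2 s) (N1 sig1 lam2 s x) x := by
  have := ((hz lam2 x).mul (hqq sig1 lam2 s x)).const_sub sig1
  refine this.congr_deriv ?_
  simp only [N1, z, zp, qq]; ring


lemma hBB (sig1 lam2 s x : ℝ) (hd : dd sig1 lam2 x ≠ 0) :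
    HasDerivAt (BB sig1 lam2) (B1 sig1 lam2 x) x := by
  have := (hz lam2 x).div (hdd sig1 lam2 x) hd
  refine this.congr_deriv ?_
  have hd' : sig1 - lam2 * (Real.exp x - 1) ≠ 0 := by simpa [dd, z] using hd
  simp only [B1, BB, z, zp, dd]
  field_simp
  ring

lemma hCC (sig1 lam2 s x : ℝ) (hd : dd sig1 lam2 x ≠ 0) :
    HasDerivAt (CC sig1 lam2 s) (C1 sig1 lam2 s x) x := by
  have := (((hqq sig1 lam2 s x).const_sub 1).div (hdd sig1 lam2 x) hd).const_sub s
  refine this.congr_deriv ?_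
  have hd' : sig1 - lam2 * (Real.exp x - 1) ≠ 0 := by simpa [dd, z] using hd
  simp only [C1, CC, z, zp, dd, qq]
  field_simp
  ring

lemma hN1 (sig1 lam2 s x : ℝ) : HasDerivAt (N1 sig1 lam2 s) (N2 sig1 lam2 s x) x := by
  have := (((hzp lam2 x).mul (hqq sig1 lam2 s x)).mul
    (((hz lam2 x).const_mul s).const_add 1)).neg
  refine this.congr_deriv ?_
  simp only [N1, N2, z, zp, qq, Pi.mul_apply, Pi.pow_apply]
  ring

lemma hB1 (sig1 lam2 s x : ℝ) (hd : dd sig1 lam2 x ≠ 0) :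
    HasDerivAt (B1 sig1 lam2) (B2 sig1 lam2 x) x := by
  have hpow : dd sig1 lam2 x ^ 2 ≠ 0 := pow_ne_zero 2 hd
  have := ((hzp lam2 x).const_mul sig1).div ((hdd sig1 lam2 x).pow 2) hpow
  refine this.congr_deriv ?_
  have hd' : sig1 - lam2 * (Real.exp x - 1) ≠ 0 := by simpa [dd, z] using hd
  simp only [B1, B2, z, zp, dd, Pi.mul_apply, Pi.pow_apply]
  field_simp
  ring

lemma hC1 (sig1 lam2 s x : ℝ) (hd : dd sig1 lam2 x ≠ 0) :
    HasDerivAt (C1 sig1 lam2 s) (C2 sig1 lam2 s x) x := by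
  have hpow : dd sig1 lam2 x ^ 2 ≠ 0 := pow_ne_zero 2 hd
  have hu : HasDerivAt
      (fun x => zp lam2 x * (s * qq sig1 lam2 s x * dd sig1 lam2 x - (1 - qq sig1 lam2 s x)))
      (zp lam2 x * (s * qq sig1 lam2 s x * dd sig1 lam2 x - (1 - qq sig1 lam2 s x))
        + zp lam2 x * ((s * (s * zp lam2 x * qq sig1 lam2 s x) * dd sig1 lam2 x
            + s * qq sig1 lam2 s x * (-zp lam2 x))
          - (-(s * zp lam2 x * qq sig1 lam2 s x)))) x := by
    exact (hzp lam2 x).mul ((((hqq sig1 lam2 s x).const_mul s).mul (hdd sig1 lam2 x)).sub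
      ((hqq sig1 lam2 s x).const_sub 1))
  have := hu.div ((hdd sig1 lam2 x).pow 2) hpow
  refine this.congr_deriv ?_
  have hd' : sig1 - lam2 * (Real.exp x - 1) ≠ 0 := by simpa [dd, z] using hd
  simp only [C1, C2, z, zp, dd, qq, Pi.mul_apply, Pi.pow_apply]
  field_simp
  ring

lemma hgg (sig1 lam1 lam2 s M0 x : ℝ) (hd : dd sig1 lam2 x ≠ 0) (hN : NN sig1 lam2 s x ≠ 0) :
    HasDerivAt (gg sig1 lam1 lam2 s M0) (g1 sig1 lam1 lam2 s M0 x) x := by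
  have := ((((hNN sig1 lam2 s x).log hN).sub ((hdd sig1 lam2 x).log hd)).const_mul M0).add
    ((((hBB sig1 lam2 s x hd).const_mul lam1).mul (hCC sig1 lam2 s x hd)))
  refine this.congr_deriv ?_
  simp only [g1, gg]
  ring

lemma hGG (sig1 lam1 lam2 s M0 P0 x : ℝ) (hd : dd sig1 lam2 x ≠ 0) (hN : NN sig1 lam2 s x ≠ 0) :
    HasDerivAt (GG sig1 lam1 lam2 s M0 P0) (G1 sig1 lam1 lam2 s M0 P0 x) x := by
  have := (((hasDerivAt_id x).mul_const P0).add (hgg sig1 lam1 lam2 s M0 x hd hN)).exp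
  refine this.congr_deriv ?_
  simp only [G1, GG, id_eq, Pi.add_apply]
  ring

lemma hg1 (sig1 lam1 lam2 s M0 x : ℝ) (hd : dd sig1 lam2 x ≠ 0) (hN : NN sig1 lam2 s x ≠ 0) :
    HasDerivAt (g1 sig1 lam1 lam2 s M0) (g2 sig1 lam1 lam2 s M0 x) x := by
  have hpowN : NN sig1 lam2 s x ^ 2 ≠ 0 := pow_ne_zero 2 hN
  have hpowd : dd sig1 lam2 x ^ 2 ≠ 0 := pow_ne_zero 2 hd
  have := ((((hN1 sig1 lam2 s x).div (hNN sig1 lam2 s x) hN).add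
      ((hzp lam2 x).div (hdd sig1 lam2 x) hd)).const_mul M0).add
    (((((hB1 sig1 lam2 s x hd).mul (hCC sig1 lam2 s x hd)).add
      ((hBB sig1 lam2 s x hd).mul (hC1 sig1 lam2 s x hd)))).const_mul lam1)
  refine this.congr_deriv ?_
  simp only [g2, g1]
  ring

lemma hG1 (sig1 lam1 lam2 s M0 P0 x : ℝ) (hd : dd sig1 lam2 x ≠ 0) (hN : NN sig1 lam2 s x ≠ 0) :
    HasDerivAt (G1 sig1 lam1 lam2 s M0 P0) (G2 sig1 lam1 lam2 s M0 P0 x) x := by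
  have := (hGG sig1 lam1 lam2 s M0 P0 x hd hN).mul ((hg1 sig1 lam1 lam2 s M0 x hd hN).const_add P0)
  refine this.congr_deriv ?_
  simp only [G1, G2]
  ring


lemma G1_zero (sig1 lam1 lam2 s M0 P0 : ℝ) (hsig1 : 0 < sig1) :
    G1 sig1 lam1 lam2 s M0 P0 0 = P0 + lam2 * (lam1 / sig1 * s
        + (M0 - lam1 / sig1) * (1 - Real.exp (-sig1 * s)) / sig1) := by
  simp only [G1, GG, gg, g1, NN, dd, BB, CC, qq, z, zp, N1, B1, C1]
  simp [Real.exp_zero]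
  field_simp
  ring

lemma G2_zero (sig1 lam1 lam2 s M0 P0 : ℝ) (hsig1 : 0 < sig1) :
    G2 sig1 lam1 lam2 s M0 P0 0 =
      (P0 + lam2 * (lam1 / sig1 * s
          + (M0 - lam1 / sig1) * (1 - Real.exp (-sig1 * s)) / sig1)) ^ 2
        + M0 * (lam2 / sig1) * (1 - Real.exp (-sig1 * s)
          + lam2 / sig1 * (1 - Real.exp (-sig1 * s)
            * (Real.exp (-sig1 * s) + 2 * s * sig1)))
        + lam1 * lam2 / sig1 ^ 2 * (s * sig1 - 1 + Real.exp (-sig1 * s)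
          + 2 * (lam2 / sig1) * (sig1 * s * (1 + Real.exp (-sig1 * s))
            - 2 * (1 - Real.exp (-sig1 * s)))) := by
  simp only [G2, GG, gg, g1, g2, NN, dd, BB, CC, qq, z, zp, N1, N2, B1, B2, C1, C2]
  simp [Real.exp_zero]
  field_simp
  ring

end MGF6
end

/-- The conditional moment generating function
`F ξ = e^{ξ P₀} · h(λ₂(e^ξ − 1))` of the protein number before replication, where
`h` is the moment generating function of the integrated mRNA number, is twice
differentiable at `0`, with first derivative
`F'(0) = P₀ + λ₂((λ₁/σ₁)s + (M₀ − λ₁/σ₁)(1 − e^{−σ₁ s})/σ₁)` and second derivative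
`F''(0) = F'(0)² + M₀ (λ₂/σ₁)(1 − e^{−σ₁ s} + (λ₂/σ₁)(1 − e^{−σ₁ s}(e^{−σ₁ s} + 2sσ₁)))
  + (λ₁λ₂/σ₁²)(sσ₁ − 1 + e^{−σ₁ s} + 2(λ₂/σ₁)(σ₁ s (1 + e^{−σ₁ s}) − 2(1 − e^{−σ₁ s})))`. -/
theorem mgf_protein_before_replication_two_derivs
    (sig1 lam1 lam2 s M0 P0 : ℝ)
    (hsig1 : 0 < sig1) (hlam1 : 0 ≤ lam1) (hlam2 : 0 ≤ lam2) (hs : 0 ≤ s) (hM0 : 0 ≤ M0)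
    (h F : ℝ → ℝ)
    (hh : ∀ ζ : ℝ, ζ < sig1 →
        0 < (sig1 - ζ * Real.exp (-(sig1 - ζ) * s)) / (sig1 - ζ) →
      h ζ = Real.exp (M0 * Real.log ((sig1 - ζ * Real.exp (-(sig1 - ζ) * s)) / (sig1 - ζ))
        + lam1 * (ζ / (sig1 - ζ))
          * (s - (1 - Real.exp (-(sig1 - ζ) * s)) / (sig1 - ζ))))
    (hF : ∀ ξ : ℝ, F ξ = Real.exp (ξ * P0) * h (lam2 * (Real.exp ξ - 1))) :
    HasDerivAt F
      (P0 + lam2 * (lam1 / sig1 * s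
        + (M0 - lam1 / sig1) * (1 - Real.exp (-sig1 * s)) / sig1)) 0 ∧
    HasDerivAt (deriv F)
      ((P0 + lam2 * (lam1 / sig1 * s
          + (M0 - lam1 / sig1) * (1 - Real.exp (-sig1 * s)) / sig1)) ^ 2
        + M0 * (lam2 / sig1) * (1 - Real.exp (-sig1 * s)
          + lam2 / sig1 * (1 - Real.exp (-sig1 * s)
            * (Real.exp (-sig1 * s) + 2 * s * sig1)))
        + lam1 * lam2 / sig1 ^ 2 * (s * sig1 - 1 + Real.exp (-sig1 * s)
          + 2 * (lam2 / sig1) * (sig1 * s * (1 + Real.exp (-sig1 * s))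
            - 2 * (1 - Real.exp (-sig1 * s))))) 0 := by
  have hev : ∀ᶠ x in nhds (0:ℝ), 0 < MGF6.dd sig1 lam2 x ∧ 0 < MGF6.NN sig1 lam2 s x := by
    have h1 : ∀ᶠ x in nhds (0:ℝ), 0 < MGF6.dd sig1 lam2 x := by
      have hc := (MGF6.hdd sig1 lam2 0).continuousAt.tendsto
      have hval : MGF6.dd sig1 lam2 0 = sig1 := by simp [MGF6.dd, MGF6.z]
      rw [hval] at hc
      exact hc.eventually (eventually_gt_nhds hsig1)
    have h2 : ∀ᶠ x in nhds (0:ℝ), 0 < MGF6.NN sig1 lam2 s x := by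
      have hc := (MGF6.hNN sig1 lam2 s 0).continuousAt.tendsto
      have hval : MGF6.NN sig1 lam2 s 0 = sig1 := by simp [MGF6.NN, MGF6.z]
      rw [hval] at hc
      exact hc.eventually (eventually_gt_nhds hsig1)
    exact h1.and h2
  have hFG : F =ᶠ[nhds (0:ℝ)] MGF6.GG sig1 lam1 lam2 s M0 P0 := by
    filter_upwards [hev] with x hx
    obtain ⟨hd, hN⟩ := hx
    have hd' : 0 < sig1 - lam2 * (Real.exp x - 1) := by simpa [MGF6.dd, MGF6.z] using hd
    have hN' : 0 < sig1 - lam2 * (Real.exp x - 1)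
        * Real.exp (-(sig1 - lam2 * (Real.exp x - 1)) * s) := by
      simpa [MGF6.NN, MGF6.z, MGF6.qq] using hN
    have hzlt : lam2 * (Real.exp x - 1) < sig1 := by linarith
    have hpos : 0 < (sig1 - lam2 * (Real.exp x - 1)
        * Real.exp (-(sig1 - lam2 * (Real.exp x - 1)) * s)) / (sig1 - lam2 * (Real.exp x - 1)) :=
      div_pos hN' hd'
    rw [hF x, hh _ hzlt hpos, ← Real.exp_add]
    simp only [MGF6.GG, MGF6.gg, MGF6.NN, MGF6.dd, MGF6.BB, MGF6.CC, MGF6.qq, MGF6.z]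
    rw [Real.log_div hN'.ne' hd'.ne']
  have hd0 : MGF6.dd sig1 lam2 0 ≠ 0 := by simp [MGF6.dd, MGF6.z]; exact hsig1.ne'
  have hN0 : MGF6.NN sig1 lam2 s 0 ≠ 0 := by simp [MGF6.NN, MGF6.z]; exact hsig1.ne'
  have hFderiv : deriv F =ᶠ[nhds (0:ℝ)] MGF6.G1 sig1 lam1 lam2 s M0 P0 := by
    filter_upwards [hFG.eventually_nhds, hev] with x hx hx2
    obtain ⟨hd, hN⟩ := hx2
    rw [Filter.EventuallyEq.deriv_eq hx]
    exact (MGF6.hGG sig1 lam1 lam2 s M0 P0 x hd.ne' hN.ne').deriv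
  constructor
  · have := (MGF6.hGG sig1 lam1 lam2 s M0 P0 0 hd0 hN0).congr_of_eventuallyEq hFG
    rwa [MGF6.G1_zero sig1 lam1 lam2 s M0 P0 hsig1] at this
  · have := (MGF6.hG1 sig1 lam1 lam2 s M0 P0 0 hd0 hN0).congr_of_eventuallyEq hFderiv
    rwa [MGF6.G2_zero sig1 lam1 lam2 s M0 P0 hsig1] at this
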